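/- Chain identity for L-conditional entropy along a time series: H_L(Y₀ | X₋δ) = H_L(Y₀ | X₀) + Σ_{k=0}^{δ−1} I_L(Y₀; X₋k | X₋k₋1) − Σ_{k=0}^{δ−1} I_L(Y₀; X₋k₋1 | X₋k), where both summations are nondecreasing in δ. -/

import Mathlib

open Finset

/-- The L-conditional entropy (conditional Bayes risk). -/
noncomputable def condH {Ω ZT 𝒴 A : Type*} [Fintype Ω] [Fintype ZT] [DecidableEq ZT]
    (P : Ω → ℝ) (L : 𝒴 → A → ℝ) (Yv : Ω → 𝒴) (Zv : Ω → ZT) : ℝ :=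
  ∑ z : ZT, sInf {r : ℝ | ∃ a : A,
    r = ∑ ω : Ω, (if Zv ω = z then P ω else 0) * L (Yv ω) a}

section Aux

variable {Ω 𝒴 A : Type*} [Fintype Ω] (L : 𝒴 → A → ℝ) (Yv : Ω → 𝒴)

noncomputable def fmin (w : Ω → ℝ) : ℝ :=
  sInf {r : ℝ | ∃ a : A, r = ∑ ω, w ω * L (Yv ω) a}

lemma fmin_isLeast (hattain : ∀ w : Ω → ℝ, (∀ ω, 0 ≤ w ω) →
      ∃ a : A, ∀ a' : A, ∑ ω, w ω * L (Yv ω) a ≤ ∑ ω, w ω * L (Yv ω) a')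
    (w : Ω → ℝ) (hw : ∀ ω, 0 ≤ w ω) :
    ∃ a : A, fmin L Yv w = ∑ ω, w ω * L (Yv ω) a ∧
      ∀ a' : A, ∑ ω, w ω * L (Yv ω) a ≤ ∑ ω, w ω * L (Yv ω) a' := by
  obtain ⟨a, ha⟩ := hattain w hw
  refine ⟨a, ?_, ha⟩
  have : IsLeast {r : ℝ | ∃ a : A, r = ∑ ω, w ω * L (Yv ω) a}
      (∑ ω, w ω * L (Yv ω) a) := ⟨⟨a, rfl⟩, by rintro r ⟨a', rfl⟩; exact ha a'⟩
  exact this.csInf_eq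

lemma sum_fmin_le (hattain : ∀ w : Ω → ℝ, (∀ ω, 0 ≤ w ω) →
      ∃ a : A, ∀ a' : A, ∑ ω, w ω * L (Yv ω) a ≤ ∑ ω, w ω * L (Yv ω) a')
    {ι : Type*} (s : Finset ι) (w : ι → Ω → ℝ) (hw : ∀ i ω, 0 ≤ w i ω) :
    ∑ i ∈ s, fmin L Yv (w i) ≤ fmin L Yv (fun ω => ∑ i ∈ s, w i ω) := by
  obtain ⟨a, ha, -⟩ := fmin_isLeast L Yv hattain (fun ω => ∑ i ∈ s, w i ω)
    (fun ω => Finset.sum_nonneg fun i _ => hw i ω)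
  rw [ha]
  have : ∑ ω, (∑ i ∈ s, w i ω) * L (Yv ω) a
      = ∑ i ∈ s, ∑ ω, w i ω * L (Yv ω) a := by
    rw [Finset.sum_comm]
    simp [Finset.sum_mul]
  rw [this]
  refine Finset.sum_le_sum fun i _ => ?_
  obtain ⟨ai, hai, hle⟩ := fmin_isLeast L Yv hattain (w i) (hw i)
  rw [hai]; exact hle a

lemma condH_eq_sum_fmin {ZT : Type*} [Fintype ZT] [DecidableEq ZT]
    (P : Ω → ℝ) (Zv : Ω → ZT) :
    condH P L Yv Zv = ∑ z : ZT, fmin L Yv (fun ω => if Zv ω = z then P ω else 0) :=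
  rfl

lemma condH_pair_le_snd {𝒳 ZT : Type*} [Fintype 𝒳] [DecidableEq 𝒳]
    [Fintype ZT] [DecidableEq ZT] (P : Ω → ℝ) (hnn : ∀ ω, 0 ≤ P ω)
    (hattain : ∀ w : Ω → ℝ, (∀ ω, 0 ≤ w ω) →
      ∃ a : A, ∀ a' : A, ∑ ω, w ω * L (Yv ω) a ≤ ∑ ω, w ω * L (Yv ω) a')
    (Uv : Ω → 𝒳) (Zv : Ω → ZT) :
    condH P L Yv (fun ω => (Uv ω, Zv ω)) ≤ condH P L Yv Zv := by
  rw [condH_eq_sum_fmin, condH_eq_sum_fmin, Fintype.sum_prod_type, Finset.sum_comm]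
  refine Finset.sum_le_sum fun z _ => ?_
  have hkey : (fun ω => if Zv ω = z then P ω else 0)
      = fun ω => ∑ x : 𝒳, (if (Uv ω, Zv ω) = (x, z) then P ω else 0) := by
    funext ω
    simp only [Prod.mk.injEq, ite_and]
    rw [Finset.sum_ite_eq (Finset.univ) (Uv ω) (fun _ => if Zv ω = z then P ω else 0)]
    simp
  calc ∑ x : 𝒳, fmin L Yv (fun ω => if (Uv ω, Zv ω) = (x, z) then P ω else 0)
      ≤ fmin L Yv (fun ω => ∑ x : 𝒳, (if (Uv ω, Zv ω) = (x, z) then P ω else 0)) := by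
        refine sum_fmin_le L Yv hattain _ _ fun x ω => ?_
        split <;> simp [hnn ω]
    _ = fmin L Yv (fun ω => if Zv ω = z then P ω else 0) := by rw [← hkey]

lemma condH_pair_le_fst {𝒳 ZT : Type*} [Fintype 𝒳] [DecidableEq 𝒳]
    [Fintype ZT] [DecidableEq ZT] (P : Ω → ℝ) (hnn : ∀ ω, 0 ≤ P ω)
    (hattain : ∀ w : Ω → ℝ, (∀ ω, 0 ≤ w ω) →
      ∃ a : A, ∀ a' : A, ∑ ω, w ω * L (Yv ω) a ≤ ∑ ω, w ω * L (Yv ω) a')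
    (Uv : Ω → 𝒳) (Zv : Ω → ZT) :
    condH P L Yv (fun ω => (Uv ω, Zv ω)) ≤ condH P L Yv Uv := by
  rw [condH_eq_sum_fmin, condH_eq_sum_fmin, Fintype.sum_prod_type]
  refine Finset.sum_le_sum fun x _ => ?_
  have hkey : (fun ω => if Uv ω = x then P ω else 0)
      = fun ω => ∑ z : ZT, (if (Uv ω, Zv ω) = (x, z) then P ω else 0) := by
    funext ω
    simp only [Prod.mk.injEq, ite_and]
    by_cases h : Uv ω = x
    · simp [h, Finset.sum_ite_eq Finset.univ (Zv ω) (fun _ => P ω)]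
    · simp [h]
  calc ∑ z : ZT, fmin L Yv (fun ω => if (Uv ω, Zv ω) = (x, z) then P ω else 0)
      ≤ fmin L Yv (fun ω => ∑ z : ZT, (if (Uv ω, Zv ω) = (x, z) then P ω else 0)) := by
        refine sum_fmin_le L Yv hattain _ _ fun z ω => ?_
        split <;> simp [hnn ω]
    _ = fmin L Yv (fun ω => if Uv ω = x then P ω else 0) := by rw [← hkey]

end Aux

theorem stmt6 {Ω 𝒴 𝒳 A : Type*} [Fintype Ω] [Fintype 𝒳] [DecidableEq 𝒳]
    (P : Ω → ℝ) (L : 𝒴 → A → ℝ) (Yv : Ω → 𝒴) (Xv : ℕ → Ω → 𝒳)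
    (hnn : ∀ ω, 0 ≤ P ω) (h1 : ∑ ω, P ω = 1)
    (hattain : ∀ w : Ω → ℝ, (∀ ω, 0 ≤ w ω) →
      ∃ a : A, ∀ a' : A, ∑ ω, w ω * L (Yv ω) a ≤ ∑ ω, w ω * L (Yv ω) a')
    (δ : ℕ) :
    (condH P L Yv (Xv δ)
      = condH P L Yv (Xv 0)
        + (∑ k ∈ Finset.range δ,
            (condH P L Yv (Xv (k + 1)) - condH P L Yv (fun ω => (Xv k ω, Xv (k + 1) ω))))
        - ∑ k ∈ Finset.range δ,
            (condH P L Yv (Xv k) - condH P L Yv (fun ω => (Xv k ω, Xv (k + 1) ω))))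
    ∧ Monotone (fun d : ℕ => ∑ k ∈ Finset.range d,
        (condH P L Yv (Xv (k + 1)) - condH P L Yv (fun ω => (Xv k ω, Xv (k + 1) ω))))
    ∧ Monotone (fun d : ℕ => ∑ k ∈ Finset.range d,
        (condH P L Yv (Xv k) - condH P L Yv (fun ω => (Xv k ω, Xv (k + 1) ω)))) := by
  refine ⟨?_, ?_, ?_⟩
  · have key : (∑ k ∈ Finset.range δ,
          (condH P L Yv (Xv (k + 1)) - condH P L Yv (fun ω => (Xv k ω, Xv (k + 1) ω))))
        - ∑ k ∈ Finset.range δ,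
          (condH P L Yv (Xv k) - condH P L Yv (fun ω => (Xv k ω, Xv (k + 1) ω)))
        = condH P L Yv (Xv δ) - condH P L Yv (Xv 0) := by
      rw [← Finset.sum_sub_distrib]
      have h2 : ∀ k ∈ Finset.range δ,
          (condH P L Yv (Xv (k + 1)) - condH P L Yv (fun ω => (Xv k ω, Xv (k + 1) ω)))
            - (condH P L Yv (Xv k) - condH P L Yv (fun ω => (Xv k ω, Xv (k + 1) ω)))
          = condH P L Yv (Xv (k + 1)) - condH P L Yv (Xv k) := by
        intro k _; ring
      rw [Finset.sum_congr rfl h2, Finset.sum_range_sub (fun k => condH P L Yv (Xv k))]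
    linarith
  · refine monotone_nat_of_le_succ fun d => ?_
    rw [Finset.sum_range_succ]
    have := condH_pair_le_snd L Yv P hnn hattain (Xv d) (Xv (d + 1))
    linarith
  · refine monotone_nat_of_le_succ fun d => ?_
    rw [Finset.sum_range_succ]
    have := condH_pair_le_fst L Yv P hnn hattain (Xv d) (Xv (d + 1))
    linarith
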